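/- Fix a layer h of an MDP satisfying pushforward coverability with constant C_push. Suppose functions g^(1),…,g^(T) taking values in [0,B] and state-action pairs (x^(1),a^(1)),…,(x^(T),a^(T)) satisfy, for all t ∈ [T], ∑_{i<t} E[(g^(t)(x_h))² | x_{h−1}=x^(i), a_{h−1}=a^(i)] ≤ β². Then ∑_{t=1}^T E[g^(t)(x_h) | x_{h−1}=x^(t), a_{h−1}=a^(t)] ≤ 2√(β² C_push T log(2T)) + 2B C_push, and consequently min_{t∈[T]} E[g^(t)(x_h) | x_{h−1}=x^(t), a_{h−1}=a^(t)] ≤ 2√(β² C_push log(2T)/T) + 2B C_push / T. -/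

import Mathlib

open Finset

lemma aux_mono (a : ℕ → ℝ) (ha : ∀ t, 0 ≤ a t) {s t : ℕ} (h : s ≤ t) :
    ∑ i ∈ range s, a i ≤ ∑ i ∈ range t, a i :=
  Finset.sum_le_sum_of_subset_of_nonneg (Finset.range_subset_range.mpr h) (fun i _ _ => ha i)

lemma aux_burn (a : ℕ → ℝ) (ha : ∀ t, 0 ≤ a t) (M : ℝ)
    (haM : ∀ t, a t ≤ M) (n : ℕ) :
    ∑ t ∈ range n, (if (∑ i ∈ range t, a i) < M then a t else 0) ≤ 2 * M := by
  have hM : 0 ≤ M := le_trans (ha 0) (haM 0)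
  induction n with
  | zero => simp only [range_zero, sum_empty]; linarith
  | succ n ih =>
    rw [Finset.sum_range_succ]
    by_cases h : (∑ i ∈ range n, a i) < M
    · have hall : ∀ t ∈ range n, (if (∑ i ∈ range t, a i) < M then a t else 0) = a t := by
        intro t ht
        rw [if_pos (lt_of_le_of_lt (aux_mono a ha (le_of_lt (mem_range.mp ht))) h)]
      rw [if_pos h, Finset.sum_congr rfl hall]
      linarith [haM n]
    · rw [if_neg h]
      linarith [ih]

lemma aux_q (a : ℕ → ℝ) (ha : ∀ t, 0 ≤ a t) (M : ℝ)
    (haM : ∀ t, a t ≤ M) (n : ℕ) (hn : 1 ≤ n) :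
    ∑ t ∈ range n, (if M ≤ ∑ i ∈ range t, a i then (a t)^2 / (∑ i ∈ range t, a i) else 0)
      ≤ 2 * M * Real.log (2 * n) := by
  have hM : 0 ≤ M := le_trans (ha 0) (haM 0)
  rcases eq_or_lt_of_le hM with hM0 | hM0
  · have ha0 : ∀ t, a t = 0 := fun t => le_antisymm (hM0 ▸ haM t) (ha t)
    have hz : ∀ t ∈ range n,
        (if M ≤ ∑ i ∈ range t, a i then (a t)^2 / (∑ i ∈ range t, a i) else 0) = 0 := by
      intro t _
      rw [ha0 t]
      simp
    rw [Finset.sum_congr rfl hz, Finset.sum_const, ← hM0]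
    simp
  · -- M > 0
    set L : ℕ → ℝ := fun t => Real.log (max (∑ i ∈ range t, a i) M) with hL
    have hmaxpos : ∀ t, (0:ℝ) < max (∑ i ∈ range t, a i) M :=
      fun t => lt_of_lt_of_le hM0 (le_max_right _ _)
    have hterm : ∀ t ∈ range n,
        (if M ≤ ∑ i ∈ range t, a i then (a t)^2 / (∑ i ∈ range t, a i) else 0)
          ≤ 2 * M * (L (t+1) - L t) := by
      intro t _
      by_cases h : M ≤ ∑ i ∈ range t, a i
      · set s := ∑ i ∈ range t, a i with hs
        have hs0 : 0 < s := lt_of_lt_of_le hM0 h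
        have hst : ∑ i ∈ range (t+1), a i = s + a t := Finset.sum_range_succ a t
        have hs10 : 0 < ∑ i ∈ range (t+1), a i := by rw [hst]; linarith [ha t]
        have hmax1 : max s M = s := max_eq_left h
        have hmax2 : max (∑ i ∈ range (t+1), a i) M =
            ∑ i ∈ range (t+1), a i :=
          max_eq_left (le_trans h (aux_mono a ha (Nat.le_succ t)))
        have e2 := Real.log_le_sub_one_of_pos
          (show 0 < s / (∑ i ∈ range (t+1), a i) by positivity)
        rw [Real.log_div (ne_of_gt hs0) (ne_of_gt hs10)] at e2
        have e4 : 1 - s / (∑ i ∈ range (t+1), a i) = a t / (∑ i ∈ range (t+1), a i) := by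
          have hne : s + a t ≠ 0 := by linarith [ha t]
          rw [hst]
          field_simp
          ring
        have e3 : a t / (∑ i ∈ range (t+1), a i)
            ≤ Real.log (∑ i ∈ range (t+1), a i) - Real.log s := by linarith [e2, e4.symm.le, e4.le]
        have e5 : a t / (2 * s) ≤ a t / (∑ i ∈ range (t+1), a i) := by
          apply div_le_div_of_nonneg_left (ha t) hs10
          · rw [hst]; linarith [haM t, h]
        rw [if_pos h, hL]
        simp only [hmax1, hmax2, ← hs]
        calc (a t)^2 / s = 2 * M * (a t / (2 * s)) * (a t / M) := by
              field_simp
          _ ≤ 2 * M * (a t / (2 * s)) * 1 := by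
              apply mul_le_mul_of_nonneg_left _
                (mul_nonneg (by positivity) (div_nonneg (ha t) (by positivity)))
              rw [div_le_one hM0]; exact haM t
          _ = 2 * M * (a t / (2 * s)) := by ring
          _ ≤ 2 * M * (Real.log (∑ i ∈ range (t+1), a i) - Real.log s) := by
              apply mul_le_mul_of_nonneg_left (le_trans e5 e3) (by positivity)
      · rw [if_neg h]
        apply mul_nonneg (by positivity)
        rw [sub_nonneg, hL]
        exact Real.log_le_log (hmaxpos t)
          (max_le_max (aux_mono a ha (Nat.le_succ t)) le_rfl)
    calc ∑ t ∈ range n, (if M ≤ ∑ i ∈ range t, a i then (a t)^2 / (∑ i ∈ range t, a i) else 0)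
        ≤ ∑ t ∈ range n, 2 * M * (L (t+1) - L t) := Finset.sum_le_sum hterm
      _ = 2 * M * (L n - L 0) := by rw [← Finset.mul_sum, Finset.sum_range_sub]
      _ ≤ 2 * M * Real.log (2 * n) := by
          apply mul_le_mul_of_nonneg_left _ (by positivity)
          have hL0 : L 0 = Real.log M := by simp [hL, max_eq_right hM0.le]
          have hSn : ∑ i ∈ range n, a i ≤ n * M := by
            calc ∑ i ∈ range n, a i ≤ ∑ _i ∈ range n, M := Finset.sum_le_sum fun i _ => haM i
              _ = n * M := by rw [Finset.sum_const, card_range]; simp [nsmul_eq_mul]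
          have hLn : L n ≤ Real.log (2 * n * M) := by
            apply Real.log_le_log (hmaxpos n)
            apply max_le
            · calc ∑ i ∈ range n, a i ≤ n * M := hSn
                _ ≤ 2 * n * M := by nlinarith [(by exact_mod_cast hn : (1:ℝ) ≤ (n:ℝ)), hM0]
            · have h1 : (1:ℝ) ≤ n := Nat.one_le_cast.mpr hn
              nlinarith
          have : Real.log (2 * n * M) = Real.log (2 * n) + Real.log M := by
            rw [Real.log_mul (by positivity) (ne_of_gt hM0)]
          rw [hL0]
          have h2n : (0:ℝ) < 2 * n := by positivity
          linarith [hLn, this]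

lemma main_bound {X : Type*} [Countable X]
    (Cpush B : ℝ) (hC : 0 < Cpush) (hB : 0 < B)
    (T : ℕ) (hT : 1 ≤ T)
    (d : ℕ → X → ℝ) (μ : X → ℝ)
    (hd0 : ∀ t x, 0 ≤ d t x) (hdsum : ∀ t, Summable (d t))
    (hμ0 : ∀ x, 0 ≤ μ x) (hμsum : Summable μ) (hμ1 : ∑' x, μ x = 1)
    (hcov : ∀ t x, d t x ≤ Cpush * μ x)
    (g : ℕ → X → ℝ) (hg : ∀ t x, g t x ∈ Set.Icc 0 B)
    (lam : ℝ) (hlam : 0 < lam) :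
    ∑ t ∈ range T, ∑' x, d t x * g t x
      ≤ 2 * B * Cpush + lam * Cpush * Real.log (2 * T)
        + (1/(2*lam)) * ∑ t ∈ range T, ∑ i ∈ range t, ∑' x, d i x * (g t x)^2 := by
  -- abbreviations
  set S : ℕ → X → ℝ := fun t x => ∑ i ∈ range t, d i x with hS
  set bf : ℕ → X → ℝ := fun t x => if S t x < Cpush * μ x then B * d t x else 0 with hbf
  set qf : ℕ → X → ℝ := fun t x =>
    if Cpush * μ x ≤ S t x then (d t x)^2 / S t x else 0 with hqf
  set rf : ℕ → X → ℝ := fun t x => S t x * (g t x)^2 with hrf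
  have hS0 : ∀ t x, 0 ≤ S t x := fun t x => Finset.sum_nonneg fun i _ => hd0 i x
  -- summability
  have hsum_dg : ∀ t, Summable (fun x => d t x * g t x) :=
    fun t => Summable.of_nonneg_of_le
      (fun x => mul_nonneg (hd0 t x) (hg t x).1)
      (fun x => mul_le_mul_of_nonneg_left (hg t x).2 (hd0 t x))
      ((hdsum t).mul_right B)
  have hbf_le : ∀ t x, bf t x ≤ B * d t x := by
    intro t x
    simp only [hbf]
    split
    · exact le_refl _
    · exact mul_nonneg hB.le (hd0 t x)
  have hbf0 : ∀ t x, 0 ≤ bf t x := by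
    intro t x; simp only [hbf]; split
    · exact mul_nonneg hB.le (hd0 t x)
    · exact le_refl _
  have hsum_bf : ∀ t, Summable (bf t) :=
    fun t => Summable.of_nonneg_of_le (hbf0 t) (hbf_le t) ((hdsum t).mul_left B)
  have hqf_le : ∀ t x, qf t x ≤ Cpush * μ x := by
    intro t x
    simp only [hqf]
    split
    · rename_i h
      rcases eq_or_lt_of_le (hS0 t x) with h0 | h0
      · rw [← h0]
        simp only [div_zero]
        exact mul_nonneg hC.le (hμ0 x)
      · have hds : d t x ≤ S t x := le_trans (hcov t x) h
        calc (d t x)^2 / S t x ≤ d t x * S t x / S t x := by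
              apply div_le_div_of_nonneg_right _ h0.le
              nlinarith [hd0 t x]
          _ = d t x := by field_simp
          _ ≤ Cpush * μ x := hcov t x
    · exact mul_nonneg hC.le (hμ0 x)
  have hqf0 : ∀ t x, 0 ≤ qf t x := by
    intro t x; simp only [hqf]; split
    · exact div_nonneg (sq_nonneg _) (hS0 t x)
    · exact le_refl _
  have hsum_qf : ∀ t, Summable (qf t) :=
    fun t => Summable.of_nonneg_of_le (hqf0 t) (hqf_le t) (hμsum.mul_left Cpush)
  have hsum_S : ∀ t, Summable (fun x => S t x) :=
    fun t => summable_sum (fun i _ => hdsum i)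
  have hrf0 : ∀ t x, 0 ≤ rf t x := fun t x => mul_nonneg (hS0 t x) (sq_nonneg _)
  have hrf_le : ∀ t x, rf t x ≤ S t x * B^2 := by
    intro t x
    apply mul_le_mul_of_nonneg_left _ (hS0 t x)
    exact pow_le_pow_left₀ (hg t x).1 (hg t x).2 2
  have hsum_rf : ∀ t, Summable (rf t) :=
    fun t => Summable.of_nonneg_of_le (hrf0 t) (hrf_le t) ((hsum_S t).mul_right (B^2))
  have hsum_dgsq : ∀ i t, Summable (fun x => d i x * (g t x)^2) := by
    intro i t
    apply Summable.of_nonneg_of_le (fun x => mul_nonneg (hd0 i x) (sq_nonneg _))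
      (fun x => mul_le_mul_of_nonneg_left (pow_le_pow_left₀ (hg t x).1 (hg t x).2 2) (hd0 i x))
      ((hdsum i).mul_right (B^2))
  -- pointwise key inequality
  have key : ∀ t x, d t x * g t x
      ≤ bf t x + (lam/2) * qf t x + (1/(2*lam)) * rf t x := by
    intro t x
    have hg0 := (hg t x).1
    have hgB := (hg t x).2
    have hd := hd0 t x
    have hs0 := hS0 t x
    by_cases h : S t x < Cpush * μ x
    · have hb : bf t x = B * d t x := by simp only [hbf]; rw [if_pos h]
      have hq : qf t x = 0 := by simp only [hqf]; rw [if_neg (not_le.mpr h)]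
      rw [hb, hq]
      have h1 : d t x * g t x ≤ B * d t x := by nlinarith [mul_nonneg hd (sub_nonneg.mpr hgB)]
      have h2 : 0 ≤ (1/(2*lam)) * rf t x :=
        mul_nonneg (by positivity) (hrf0 t x)
      linarith
    · have hb : bf t x = 0 := by simp only [hbf]; rw [if_neg h]
      have hq : qf t x = (d t x)^2 / S t x := by simp only [hqf]; rw [if_pos (not_lt.mp h)]
      rw [hb, hq]
      rcases eq_or_lt_of_le hs0 with h0 | h0
      · have hd0' : d t x = 0 :=
          le_antisymm (le_trans (hcov t x) (le_trans (not_lt.mp h) h0.symm.le)) hd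
        rw [hd0']
        simp only [zero_mul, ne_eq, OfNat.ofNat_ne_zero, not_false_eq_true, zero_pow, zero_div,
          mul_zero, zero_add, add_zero]
        exact mul_nonneg (by positivity) (hrf0 t x)
      · have heq : (lam/2) * ((d t x)^2 / S t x) + (1/(2*lam)) * rf t x - d t x * g t x
            = (lam * d t x - S t x * g t x)^2 / (2 * lam * S t x) := by
          simp only [hrf]
          field_simp
          ring
        have hnn : 0 ≤ (lam * d t x - S t x * g t x)^2 / (2 * lam * S t x) := by positivity
        linarith [heq, hnn]
  -- per-t tsum inequality
  have per_t : ∀ t, ∑' x, d t x * g t x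
      ≤ (∑' x, bf t x) + (lam/2) * (∑' x, qf t x) + (1/(2*lam)) * (∑' x, rf t x) := by
    intro t
    calc ∑' x, d t x * g t x
        ≤ ∑' x, (bf t x + (lam/2) * qf t x + (1/(2*lam)) * rf t x) := by
          apply Summable.tsum_le_tsum (key t) (hsum_dg t)
          exact ((hsum_bf t).add ((hsum_qf t).mul_left _)).add ((hsum_rf t).mul_left _)
      _ = (∑' x, bf t x) + (lam/2) * (∑' x, qf t x) + (1/(2*lam)) * (∑' x, rf t x) := by
          rw [Summable.tsum_add ((hsum_bf t).add ((hsum_qf t).mul_left _)) ((hsum_rf t).mul_left _),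
            Summable.tsum_add (hsum_bf t) ((hsum_qf t).mul_left _), tsum_mul_left, tsum_mul_left]
  -- bound A
  have hA : ∑ t ∈ range T, ∑' x, bf t x ≤ 2 * B * Cpush := by
    rw [← Summable.tsum_finsetSum (fun t _ => hsum_bf t)]
    have hx : ∀ x, ∑ t ∈ range T, bf t x ≤ (2 * B * Cpush) * μ x := by
      intro x
      have h1 : ∑ t ∈ range T, bf t x
          = B * ∑ t ∈ range T, (if S t x < Cpush * μ x then d t x else 0) := by
        rw [Finset.mul_sum]
        apply Finset.sum_congr rfl
        intro t _
        simp only [hbf]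
        split <;> simp
      rw [h1]
      calc B * ∑ t ∈ range T, (if S t x < Cpush * μ x then d t x else 0)
          ≤ B * (2 * (Cpush * μ x)) := by
            apply mul_le_mul_of_nonneg_left _ hB.le
            exact aux_burn (fun i => d i x) (fun i => hd0 i x) _ (fun i => hcov i x) T
        _ = (2 * B * Cpush) * μ x := by ring
    calc ∑' x, ∑ t ∈ range T, bf t x ≤ ∑' x, (2 * B * Cpush) * μ x := by
          apply Summable.tsum_le_tsum hx (summable_sum (fun t _ => hsum_bf t)) (hμsum.mul_left _)
      _ = 2 * B * Cpush := by rw [tsum_mul_left, hμ1, mul_one]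
  -- bound Q
  have hQ : ∑ t ∈ range T, ∑' x, qf t x ≤ 2 * Cpush * Real.log (2 * T) := by
    rw [← Summable.tsum_finsetSum (fun t _ => hsum_qf t)]
    have hlogpos : (0:ℝ) ≤ Real.log (2 * T) := by
      apply Real.log_nonneg
      have : (1:ℝ) ≤ (T:ℝ) := by exact_mod_cast hT
      linarith
    have hx : ∀ x, ∑ t ∈ range T, qf t x ≤ (2 * Cpush * Real.log (2 * T)) * μ x := by
      intro x
      calc ∑ t ∈ range T, qf t x
          ≤ 2 * (Cpush * μ x) * Real.log (2 * T) :=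
            aux_q (fun i => d i x) (fun i => hd0 i x) _ (fun i => hcov i x) T hT
        _ = (2 * Cpush * Real.log (2 * T)) * μ x := by ring
    calc ∑' x, ∑ t ∈ range T, qf t x ≤ ∑' x, (2 * Cpush * Real.log (2 * T)) * μ x := by
          apply Summable.tsum_le_tsum hx (summable_sum (fun t _ => hsum_qf t)) (hμsum.mul_left _)
      _ = 2 * Cpush * Real.log (2 * T) := by rw [tsum_mul_left, hμ1, mul_one]
  -- identity for r
  have hR : ∀ t, ∑' x, rf t x = ∑ i ∈ range t, ∑' x, d i x * (g t x)^2 := by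
    intro t
    have : ∀ x, rf t x = ∑ i ∈ range t, d i x * (g t x)^2 := by
      intro x
      simp only [hrf, hS]
      rw [Finset.sum_mul]
    rw [tsum_congr this, Summable.tsum_finsetSum (fun i _ => hsum_dgsq i t)]
  -- assemble
  calc ∑ t ∈ range T, ∑' x, d t x * g t x
      ≤ ∑ t ∈ range T, ((∑' x, bf t x) + (lam/2) * (∑' x, qf t x)
          + (1/(2*lam)) * (∑' x, rf t x)) := Finset.sum_le_sum (fun t _ => per_t t)
    _ = (∑ t ∈ range T, ∑' x, bf t x) + (lam/2) * (∑ t ∈ range T, ∑' x, qf t x)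
          + (1/(2*lam)) * (∑ t ∈ range T, ∑' x, rf t x) := by
        rw [Finset.sum_add_distrib, Finset.sum_add_distrib, Finset.mul_sum, Finset.mul_sum]
    _ ≤ 2 * B * Cpush + (lam/2) * (2 * Cpush * Real.log (2 * T))
          + (1/(2*lam)) * (∑ t ∈ range T, ∑ i ∈ range t, ∑' x, d i x * (g t x)^2) := by
        have h1 : (lam/2) * (∑ t ∈ range T, ∑' x, qf t x)
            ≤ (lam/2) * (2 * Cpush * Real.log (2 * T)) :=
          mul_le_mul_of_nonneg_left hQ (by positivity)
        have h2 : (1/(2*lam)) * (∑ t ∈ range T, ∑' x, rf t x)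
            = (1/(2*lam)) * (∑ t ∈ range T, ∑ i ∈ range t, ∑' x, d i x * (g t x)^2) := by
          congr 1
          exact Finset.sum_congr rfl (fun t _ => hR t)
        linarith [hA, h1, h2.le, h2.ge]
    _ = 2 * B * Cpush + lam * Cpush * Real.log (2 * T)
          + (1/(2*lam)) * ∑ t ∈ range T, ∑ i ∈ range t, ∑' x, d i x * (g t x)^2 := by ring

/-- pushforward coverability potential lemma. Here
`d t x = P[x_h = x | x_{h-1} = x^(t), a_{h-1} = a^(t)]` is the next-state
distribution from the `t`-th state-action pair, pushforward coverability
is witnessed by the distribution `μ` with `d t x ≤ C_push · μ x`, and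
`g t : X → [0, B]`.  If for all `t < T`,
`∑_{i<t} E[(g t (x_h))² | x^(i), a^(i)] ≤ β²`, then
`∑_t E[g t (x_h) | x^(t), a^(t)] ≤ 2 √(β² C_push T log(2T)) + 2 B C_push`,
and consequently the minimum over `t` is at most
`2 √(β² C_push log(2T)/T) + 2 B C_push / T`. -/
theorem stmt_10 {X : Type*} [Countable X]
    (Cpush B β : ℝ) (hC : 0 < Cpush) (hB : 0 < B) (hβ : 0 ≤ β)
    (T : ℕ) (hT : 1 ≤ T)
    (d : ℕ → X → ℝ) (μ : X → ℝ)
    (hd0 : ∀ t x, 0 ≤ d t x) (hdsum : ∀ t, Summable (d t))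
    (hd1 : ∀ t, ∑' x, d t x = 1)
    (hμ0 : ∀ x, 0 ≤ μ x) (hμsum : Summable μ) (hμ1 : ∑' x, μ x = 1)
    (hcov : ∀ t x, d t x ≤ Cpush * μ x)
    (g : ℕ → X → ℝ) (hg : ∀ t x, g t x ∈ Set.Icc 0 B)
    (hsq : ∀ t ∈ Finset.range T,
      ∑ i ∈ Finset.range t, ∑' x, d i x * (g t x)^2 ≤ β^2) :
    (∑ t ∈ Finset.range T, ∑' x, d t x * g t x
        ≤ 2 * Real.sqrt (β^2 * Cpush * T * Real.log (2 * T)) + 2 * B * Cpush) ∧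
    ((Finset.range T).inf' (Finset.nonempty_range_iff.mpr (by omega))
        (fun t => ∑' x, d t x * g t x)
      ≤ 2 * Real.sqrt (β^2 * Cpush * Real.log (2 * T) / T) + 2 * B * Cpush / T) := by
  have hT1 : (1:ℝ) ≤ (T:ℝ) := by exact_mod_cast hT
  have hTpos : (0:ℝ) < T := by linarith
  have hlog : 0 < Real.log (2 * T) := Real.log_pos (by linarith)
  set p := Cpush * Real.log (2 * T) with hp
  have hp0 : 0 < p := mul_pos hC hlog
  have hbound : ∀ lam, 0 < lam → ∑ t ∈ Finset.range T, ∑' x, d t x * g t x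
      ≤ 2 * B * Cpush + lam * p + (1/(2*lam)) * ((T:ℝ) * β^2) := by
    intro lam hlam
    have h1 := main_bound Cpush B hC hB T hT d μ hd0 hdsum hμ0 hμsum hμ1 hcov g hg lam hlam
    have h2 : ∑ t ∈ Finset.range T, ∑ i ∈ Finset.range t, ∑' x, d i x * (g t x)^2
        ≤ (T:ℝ) * β^2 := by
      calc ∑ t ∈ Finset.range T, ∑ i ∈ Finset.range t, ∑' x, d i x * (g t x)^2
          ≤ ∑ _t ∈ Finset.range T, β^2 := Finset.sum_le_sum hsq
        _ = (T:ℝ) * β^2 := by rw [Finset.sum_const, card_range, nsmul_eq_mul]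
    have h3 : (1/(2*lam)) * (∑ t ∈ Finset.range T, ∑ i ∈ Finset.range t, ∑' x, d i x * (g t x)^2)
        ≤ (1/(2*lam)) * ((T:ℝ) * β^2) := mul_le_mul_of_nonneg_left h2 (by positivity)
    have h4 : lam * Cpush * Real.log (2 * T) = lam * p := by rw [hp]; ring
    linarith [h1, h3, h4.le, h4.ge]
  have hmain : ∑ t ∈ Finset.range T, ∑' x, d t x * g t x
      ≤ 2 * Real.sqrt (β^2 * Cpush * T * Real.log (2 * T)) + 2 * B * Cpush := by
    by_cases hβ0 : β = 0
    · subst hβ0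
      have hz : Real.sqrt ((0:ℝ)^2 * Cpush * T * Real.log (2 * T)) = 0 := by
        simp
      rw [hz, mul_zero, zero_add]
      apply le_of_forall_pos_le_add
      intro ε hε
      have hlam : 0 < ε / p := by positivity
      have := hbound (ε / p) hlam
      have he : (ε / p) * p = ε := by field_simp
      simp only [ne_eq, OfNat.ofNat_ne_zero, not_false_eq_true, zero_pow, mul_zero] at this
      linarith [this, he.le, he.ge]
    · have hβpos : 0 < β := lt_of_le_of_ne hβ (Ne.symm hβ0)
      set q := (T:ℝ) * β^2 with hqdef
      have hq0 : 0 < q := by positivity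
      set lam := Real.sqrt (q / (2 * p)) with hlamdef
      have hlam : 0 < lam := Real.sqrt_pos.mpr (by positivity)
      have hlam2 : lam^2 = q / (2 * p) := Real.sq_sqrt (by positivity)
      have hval : lam * p + (1/(2*lam)) * q = 2 * p * lam := by
        have hq2 : q = 2 * p * lam^2 := by rw [hlam2]; field_simp
        rw [hq2]; field_simp; ring
      have hfin : 2 * p * lam ≤ 2 * Real.sqrt (β^2 * Cpush * T * Real.log (2 * T)) := by
        have hA : β^2 * Cpush * (T:ℝ) * Real.log (2 * T) = p * q := by rw [hp, hqdef]; ring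
        have h2 : (2*p*lam)^2 = 2 * p * q := by
          have e : (2*p*lam)^2 = 4*p^2*lam^2 := by ring
          rw [e, hlam2]; field_simp; ring
        calc 2*p*lam = Real.sqrt ((2*p*lam)^2) := (Real.sqrt_sq (by positivity)).symm
          _ = Real.sqrt (2*p*q) := by rw [h2]
          _ ≤ Real.sqrt (4*(p*q)) := Real.sqrt_le_sqrt (by nlinarith)
          _ = 2 * Real.sqrt (p*q) := by
              rw [show (4:ℝ)*(p*q) = 2^2*(p*q) by norm_num,
                Real.sqrt_mul (by positivity), Real.sqrt_sq (by norm_num)]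
          _ = 2 * Real.sqrt (β^2 * Cpush * T * Real.log (2 * T)) := by rw [hA]
      have := hbound lam hlam
      linarith [hval.le, hval.ge]
  refine ⟨hmain, ?_⟩
  set f : ℕ → ℝ := fun t => ∑' x, d t x * g t x with hf
  have hne : (Finset.range T).Nonempty := Finset.nonempty_range_iff.mpr (by omega)
  have hmin : (Finset.range T).inf' hne f * T ≤ ∑ t ∈ Finset.range T, f t := by
    calc (Finset.range T).inf' hne f * T = ∑ _t ∈ Finset.range T, (Finset.range T).inf' hne f := by
          rw [Finset.sum_const, card_range, nsmul_eq_mul]; ring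
      _ ≤ ∑ t ∈ Finset.range T, f t :=
          Finset.sum_le_sum (fun t ht => Finset.inf'_le f ht)
  have hdiv : (Finset.range T).inf' hne f
      ≤ (2 * Real.sqrt (β^2 * Cpush * T * Real.log (2 * T)) + 2 * B * Cpush) / T := by
    rw [le_div_iff₀ hTpos]
    calc (Finset.range T).inf' hne f * T ≤ ∑ t ∈ Finset.range T, f t := hmin
      _ ≤ 2 * Real.sqrt (β^2 * Cpush * T * Real.log (2 * T)) + 2 * B * Cpush := hmain
  have hsqrtdiv : Real.sqrt (β^2 * Cpush * Real.log (2 * T) / T)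
      = Real.sqrt (β^2 * Cpush * T * Real.log (2 * T)) / T := by
    rw [show β^2 * Cpush * Real.log (2 * T) / (T:ℝ)
        = (β^2 * Cpush * T * Real.log (2 * T)) / (T:ℝ)^2 by field_simp]
    rw [Real.sqrt_div (by positivity : (0:ℝ) ≤ β^2 * Cpush * T * Real.log (2 * T)),
      Real.sqrt_sq hTpos.le]
  calc (Finset.range T).inf' hne f
      ≤ (2 * Real.sqrt (β^2 * Cpush * T * Real.log (2 * T)) + 2 * B * Cpush) / T := hdiv
    _ = 2 * Real.sqrt (β^2 * Cpush * Real.log (2 * T) / T) + 2 * B * Cpush / T := by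
        rw [hsqrtdiv]; ring
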